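/- Suppose x† ∈ M_{q,w} and for every k ∈ supp(x†) there exists f_k ∈ Y* with u_k = A*f_k. Then the function φ_{q,w}(t) := 2 inf_{n∈ℕ} ( Σ_{k=n+1}^∞ w_k |⟨x†, u_k⟩_X|^q + t^q Σ_{k∈S_n(x†)} w_k ‖f_k‖_{Y*}^q ), with S_n(x†) = supp(x†) ∩ {1,…,n}, is a concave index function: φ_{q,w}(t) is finite for all t ∈ [0,∞), non-decreasing on [0,∞), concave on [0,∞), and satisfies lim_{t→0+} φ_{q,w}(t) = 0. -/

import Mathlib

open scoped RealInnerProductSpace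

/-- The penalty `R_{q,w}(x) = Σ_k w_k |⟨x, u_k⟩|^q`. -/
noncomputable def Rqw {X : Type*} [NormedAddCommGroup X] [InnerProductSpace ℝ X]
    (u : ℕ → X) (w : ℕ → ℝ) (q : ℝ) (x : X) : ℝ :=
  ∑' k : ℕ, w k * |⟪x, u k⟫| ^ q

/-- Membership `x ∈ M_{q,w}`, i.e. `R_{q,w}(x) < ∞`. -/
def MemMqw {X : Type*} [NormedAddCommGroup X] [InnerProductSpace ℝ X]
    (u : ℕ → X) (w : ℕ → ℝ) (q : ℝ) (x : X) : Prop :=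
  Summable fun k : ℕ => w k * |⟪x, u k⟫| ^ q

/-- The index function
`φ_{q,w}(t) = 2 inf_n ( Σ_{k ≥ n} w_k |⟨x†,u_k⟩|^q + t^q Σ_{k ∈ S_n(x†)} w_k ‖f_k‖^q )`,
where `S_n(x†)` consists of the indices `k < n` lying in the support of `x†`. -/
noncomputable def phiIdx {X Y : Type*} [NormedAddCommGroup X] [InnerProductSpace ℝ X]
    [NormedAddCommGroup Y] [NormedSpace ℝ Y]
    (u : ℕ → X) (w : ℕ → ℝ) (q : ℝ) (xdag : X) (f : ℕ → Y →L[ℝ] ℝ) (t : ℝ) : ℝ :=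
  2 * ⨅ n : ℕ, ((∑' k : ℕ, if n ≤ k then w k * |⟪xdag, u k⟫| ^ q else 0)
      + t ^ q * ∑ k ∈ Finset.filter (fun k => ⟪xdag, u k⟫ ≠ 0) (Finset.range n),
          w k * ‖f k‖ ^ q)

open Filter Topology

/-- **Theorem 4.4, properties of the rate function.** Under the assumptions of
the variational inequality theorem, the function
`φ_{q,w}(t) = 2 inf_n ( Σ_{k ≥ n} w_k |⟨x†,u_k⟩|^q + t^q Σ_{k ∈ S_n(x†)} w_k ‖f_k‖^q )`
is a concave index function: it is finite (and nonnegative) for all `t ≥ 0`, non-decreasing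
on `[0,∞)`, concave on `[0,∞)`, and `φ_{q,w}(t) → 0` as `t → 0+`. -/
theorem phi_is_concave_index_function
    {X Y : Type*} [NormedAddCommGroup X] [InnerProductSpace ℝ X] [CompleteSpace X]
    [NormedAddCommGroup Y] [NormedSpace ℝ Y]
    (u : ℕ → X) (hu : Orthonormal ℝ u)
    (hspan : (Submodule.span ℝ (Set.range u)).topologicalClosure = ⊤)
    (A : X →L[ℝ] Y) (hAinj : Function.Injective A)
    (q : ℝ) (hq0 : 0 < q) (hq1 : q ≤ 1)
    (w : ℕ → ℝ) (w0 : ℝ) (hw0 : 0 < w0) (hw : ∀ k, w0 ≤ w k)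
    (xdag : X) (hxdag : MemMqw u w q xdag)
    (f : ℕ → Y →L[ℝ] ℝ)
    (hf : ∀ k, ⟪xdag, u k⟫ ≠ 0 → ∀ x : X, ⟪u k, x⟫ = f k (A x)) :
    (∀ t : ℝ, 0 ≤ t → 0 ≤ phiIdx u w q xdag f t) ∧
    (∀ s t : ℝ, 0 ≤ s → s ≤ t → phiIdx u w q xdag f s ≤ phiIdx u w q xdag f t) ∧
    ConcaveOn ℝ (Set.Ici 0) (phiIdx u w q xdag f) ∧
    Tendsto (phiIdx u w q xdag f) (nhdsWithin 0 (Set.Ioi 0)) (nhds 0) := by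
    classical
  set c : ℕ → ℝ := fun k => w k * |⟪xdag, u k⟫| ^ q with hc
  have hc0 : ∀ k, 0 ≤ c k := fun k =>
    mul_nonneg (le_trans hw0.le (hw k)) (Real.rpow_nonneg (abs_nonneg _) q)
  set S : ℕ → ℝ := fun n => ∑ k ∈ Finset.filter (fun k => ⟪xdag, u k⟫ ≠ 0) (Finset.range n),
      w k * ‖f k‖ ^ q with hSdef
  have hS0 : ∀ n, 0 ≤ S n := fun n => Finset.sum_nonneg fun k _ =>
    mul_nonneg (le_trans hw0.le (hw k)) (Real.rpow_nonneg (norm_nonneg _) q)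
  have htails : ∀ n : ℕ, Summable fun k => if n ≤ k then c k else 0 := fun n =>
    Summable.of_nonneg_of_le (fun k => by split <;> simp [hc0 k])
      (fun k => by split <;> [exact le_rfl; exact hc0 k]) hxdag
  set T : ℕ → ℝ := fun n => ∑' k, if n ≤ k then c k else 0 with hTdef
  have hT0 : ∀ n, 0 ≤ T n := fun n => tsum_nonneg fun k => by split <;> simp [hc0 k]
  have hphi : ∀ t, phiIdx u w q xdag f t = 2 * ⨅ n : ℕ, (T n + t ^ q * S n) := fun t => rfl
  have hg0 : ∀ t : ℝ, 0 ≤ t → ∀ n, 0 ≤ T n + t ^ q * S n := fun t ht n =>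
    add_nonneg (hT0 n) (mul_nonneg (Real.rpow_nonneg ht q) (hS0 n))
  have hBdd : ∀ t : ℝ, 0 ≤ t → BddBelow (Set.range fun n => T n + t ^ q * S n) := fun t ht =>
    ⟨0, by rintro x ⟨n, rfl⟩; exact hg0 t ht n⟩
  have hnonneg : ∀ t : ℝ, 0 ≤ t → 0 ≤ phiIdx u w q xdag f t := by
    intro t ht
    rw [hphi]
    have := Real.iInf_nonneg (hg0 t ht)
    linarith
  have hmono : ∀ s t : ℝ, 0 ≤ s → s ≤ t → phiIdx u w q xdag f s ≤ phiIdx u w q xdag f t := by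
    intro s t hs hst
    rw [hphi, hphi]
    have hpow : s ^ q ≤ t ^ q := Real.rpow_le_rpow hs hst hq0.le
    have : (⨅ n : ℕ, (T n + s ^ q * S n)) ≤ ⨅ n : ℕ, (T n + t ^ q * S n) :=
      ciInf_mono (hBdd s hs) fun n => by
        have := mul_le_mul_of_nonneg_right hpow (hS0 n); linarith
    linarith
  refine ⟨hnonneg, hmono, ⟨convex_Ici 0, ?_⟩, ?_⟩
  · -- concavity
    intro x hx y hy a b ha hb hab
    simp only [smul_eq_mul, hphi]
    have hz : (0:ℝ) ≤ a * x + b * y := by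
      have := mul_nonneg ha (Set.mem_Ici.mp hx)
      have := mul_nonneg hb (Set.mem_Ici.mp hy)
      linarith
    have key : a * (⨅ n : ℕ, (T n + x ^ q * S n)) + b * (⨅ n : ℕ, (T n + y ^ q * S n)) ≤
        ⨅ n : ℕ, (T n + (a * x + b * y) ^ q * S n) := by
      refine le_ciInf fun n => ?_
      have h1 : a * (⨅ m : ℕ, (T m + x ^ q * S m)) ≤ a * (T n + x ^ q * S n) :=
        mul_le_mul_of_nonneg_left (ciInf_le (hBdd x (Set.mem_Ici.mp hx)) n) ha
      have h2 : b * (⨅ m : ℕ, (T m + y ^ q * S m)) ≤ b * (T n + y ^ q * S n) :=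
        mul_le_mul_of_nonneg_left (ciInf_le (hBdd y (Set.mem_Ici.mp hy)) n) hb
      have hconc : a * x ^ q + b * y ^ q ≤ (a * x + b * y) ^ q := by
        have := (Real.concaveOn_rpow hq0.le hq1).2 hx hy ha hb hab
        simpa [smul_eq_mul] using this
      have h3 : a * (T n + x ^ q * S n) + b * (T n + y ^ q * S n) ≤
          T n + (a * x + b * y) ^ q * S n := by
        have hmul := mul_le_mul_of_nonneg_right hconc (hS0 n)
        nlinarith [hT0 n]
      linarith
    nlinarith [key]
  · -- limit at 0+
    have hTeq : ∀ n, T n = (∑' k, c k) - ∑ k ∈ Finset.range n, c k := by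
      intro n
      have h1 : ∑ k ∈ Finset.range n, (if n ≤ k then c k else 0) +
          ∑' k, (if n ≤ k + n then c (k + n) else 0) = T n :=
        Summable.sum_add_tsum_nat_add n (htails n)
      have h2 : ∑ k ∈ Finset.range n, (if n ≤ k then c k else 0) = 0 :=
        Finset.sum_eq_zero fun k hk => by
          rw [if_neg (by simpa using Finset.mem_range.mp hk)]
      have h3 : (∑' k, (if n ≤ k + n then c (k + n) else 0)) = ∑' k, c (k + n) :=
        tsum_congr fun k => if_pos (Nat.le_add_left n k)
      have h4 : ∑ k ∈ Finset.range n, c k + ∑' k, c (k + n) = ∑' k, c k :=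
        Summable.sum_add_tsum_nat_add n hxdag
      rw [← h1, h2, h3, zero_add]; linarith
    have hT : Tendsto T atTop (𝓝 0) := by
      have h5 : Tendsto (fun n => (∑' k, c k) - ∑ k ∈ Finset.range n, c k) atTop
          (𝓝 ((∑' k, c k) - ∑' k, c k)) :=
        tendsto_const_nhds.sub hxdag.hasSum.tendsto_sum_nat
      rw [sub_self] at h5
      exact (funext hTeq : T = _) ▸ h5
    rw [Metric.tendsto_nhdsWithin_nhds]
    intro ε hε
    obtain ⟨n, hn⟩ := (Metric.tendsto_atTop.mp hT (ε / 4) (by linarith)).imp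
      (fun n h => h n le_rfl)
    have hTn : T n < ε / 4 := by
      have := hn; rw [Real.dist_eq, sub_zero, abs_of_nonneg (hT0 n)] at this; linarith
    have hB1 : (0:ℝ) < S n + 1 := by have := hS0 n; linarith
    set δ : ℝ := (ε / (4 * (S n + 1))) ^ q⁻¹ with hδdef
    have hεq : (0:ℝ) < ε / (4 * (S n + 1)) := by positivity
    have hδ : 0 < δ := Real.rpow_pos_of_pos hεq _
    refine ⟨δ, hδ, fun t ht hdist => ?_⟩
    have ht0 : 0 < t := Set.mem_Ioi.mp ht
    have htδ : t < δ := by rwa [Real.dist_eq, sub_zero, abs_of_pos ht0] at hdist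
    have hpow : t ^ q < ε / (4 * (S n + 1)) := by
      have := Real.rpow_lt_rpow ht0.le htδ hq0
      rwa [hδdef, Real.rpow_inv_rpow hεq.le hq0.ne'] at this
    have hupper : phiIdx u w q xdag f t ≤ 2 * (T n + t ^ q * S n) := by
      rw [hphi]
      have := ciInf_le (hBdd t ht0.le) n
      linarith
    have hle : t ^ q * S n < ε / 4 := by
      have h6 : t ^ q * S n ≤ t ^ q * (S n + 1) :=
        mul_le_mul_of_nonneg_left (by linarith) (Real.rpow_nonneg ht0.le q)
      have h7 : t ^ q * (S n + 1) < (ε / (4 * (S n + 1))) * (S n + 1) :=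
        mul_lt_mul_of_pos_right hpow hB1
      have h8 : (ε / (4 * (S n + 1))) * (S n + 1) = ε / 4 := by
        field_simp
      linarith
    rw [Real.dist_eq, sub_zero, abs_of_nonneg (hnonneg t ht0.le)]
    linarith
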